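/- If P is a 2×2×2 tensor of the form P(i,j,k) = Σ_{b=1}^{2} M1(b,i)·M2(b,j)·M3(b,k) for some 2×2 complex matrices M1, M2, M3, then every flattening of P into a 2×4 matrix (grouping two of the three indices together as the column index) has rank at most 2 (which is automatic), and more substantively: every 2×2×2 complex tensor can be written as a limit of tensors of this form. Formally: the set of tensors {P : Fin 2 → Fin 2 → Fin 2 → ℂ | ∃ M1 M2 M3 : Matrix (Fin 2) (Fin 2) ℂ, ∀ i j k, P i j k = Σ b, M1 b i * M2 b j * M3 b k} is dense in the space of all 2×2×2 complex tensors (with its standard topology). -/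

import Mathlib

open Polynomial

lemma rank1 (M : Fin 2 → Fin 2 → ℂ) (h : M 0 0 * M 1 1 = M 0 1 * M 1 0) :
    ∃ a b : Fin 2 → ℂ, ∀ i j, M i j = a i * b j := by
  by_cases h00 : M 0 0 = 0
  · by_cases h01 : M 0 1 = 0
    · refine ⟨![0, 1], ![M 1 0, M 1 1], fun i j => ?_⟩
      fin_cases i <;> fin_cases j <;> simp [h00, h01]
    · have h10 : M 1 0 = 0 := by
        rcases mul_eq_zero.1 (h ▸ (by rw [h00, zero_mul] : M 0 0 * M 1 1 = 0)) with h' | h'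
        · exact absurd h' h01
        · exact h'
      refine ⟨![M 0 1, M 1 1], ![0, 1], fun i j => ?_⟩
      fin_cases i <;> fin_cases j <;> simp [h00, h10]
  · refine ⟨![M 0 0, M 1 0], ![1, M 0 1 / M 0 0], fun i j => ?_⟩
    fin_cases i <;> fin_cases j <;> simp
    · field_simp
    · field_simp
      linear_combination h

noncomputable def dA (Q : Fin 2 → Fin 2 → Fin 2 → ℂ) : ℂ :=
  Q 0 0 0 * Q 1 1 0 - Q 0 1 0 * Q 1 0 0

noncomputable def dB (Q : Fin 2 → Fin 2 → Fin 2 → ℂ) : ℂ :=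
  Q 0 0 1 * Q 1 1 1 - Q 0 1 1 * Q 1 0 1

noncomputable def mm (Q : Fin 2 → Fin 2 → Fin 2 → ℂ) : ℂ :=
  Q 0 0 0 * Q 1 1 1 + Q 1 1 0 * Q 0 0 1 - Q 0 1 0 * Q 1 0 1 - Q 1 0 0 * Q 0 1 1

noncomputable def gg (Q : Fin 2 → Fin 2 → Fin 2 → ℂ) : ℂ :=
  dA Q * ((mm Q) ^ 2 - 4 * dA Q * dB Q)

lemma mem_S (P : Fin 2 → Fin 2 → Fin 2 → ℂ) (hg : gg P ≠ 0) :
    ∃ M1 M2 M3 : Matrix (Fin 2) (Fin 2) ℂ,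
      ∀ i j k, P i j k = ∑ b : Fin 2, M1 b i * M2 b j * M3 b k := by
  have hA : dA P ≠ 0 := fun h => hg (by rw [gg, h, zero_mul])
  have hD : (mm P) ^ 2 - 4 * dA P * dB P ≠ 0 := fun h => hg (by rw [gg, h, mul_zero])
  obtain ⟨s, hs⟩ := IsAlgClosed.exists_pow_nat_eq (k := ℂ) ((mm P) ^ 2 - 4 * dA P * dB P) zero_lt_two
  have hsne : s ≠ 0 := fun h => hD (by rw [← hs, h, zero_pow two_ne_zero])
  set γ : ℂ := (mm P + s) / (2 * dA P) with hγdef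
  set δ : ℂ := (mm P - s) / (2 * dA P) with hδdef
  have hγδ : δ - γ ≠ 0 := by
    have : δ - γ = -s / dA P := by rw [hγdef, hδdef]; field_simp; ring
    rw [this]
    exact div_ne_zero (neg_ne_zero.2 hsne) hA
  have hγroot : dA P * γ ^ 2 - mm P * γ + dB P = 0 := by
    rw [hγdef]
    field_simp
    linear_combination hs
  have hδroot : dA P * δ ^ 2 - mm P * δ + dB P = 0 := by
    rw [hδdef]
    field_simp
    linear_combination hs
  clear_value γ δ
  clear hs hsne hγdef hδdef hD
  rw [dA, mm, dB] at hγroot hδroot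
  obtain ⟨a, b, hab⟩ := rank1 (fun i j => δ * P i j 0 - P i j 1) (by
    linear_combination hδroot)
  obtain ⟨d, e, hde⟩ := rank1 (fun i j => P i j 1 - γ * P i j 0) (by
    linear_combination hγroot)
  refine ⟨![a, d], ![b, e], ![![(δ - γ)⁻¹, γ * (δ - γ)⁻¹], ![(δ - γ)⁻¹, δ * (δ - γ)⁻¹]],
    fun i j k => ?_⟩
  have ha' := hab i j
  have hd' := hde i j
  fin_cases k <;>
    simp only [Fin.sum_univ_two, Matrix.cons_val_zero, Matrix.cons_val_one, Matrix.head_cons,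
      Fin.isValue, Fin.zero_eta, Fin.mk_one] <;>
    rw [← ha', ← hd'] <;> field_simp <;> ring

noncomputable def EE : Fin 2 → Fin 2 → Fin 2 → ℂ :=
  ![![![1, 1], ![0, 0]], ![![0, 0], ![1, 2]]]

lemma gsmul (c : ℂ) (Q : Fin 2 → Fin 2 → Fin 2 → ℂ) :
    gg (fun i j k => c * Q i j k) = c ^ 6 * gg Q := by
  simp only [gg, dA, dB, mm]
  ring

theorem stmt0 :
    Dense {P : Fin 2 → Fin 2 → Fin 2 → ℂ |
      ∃ M1 M2 M3 : Matrix (Fin 2) (Fin 2) ℂ,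
        ∀ i j k, P i j k = ∑ b : Fin 2, M1 b i * M2 b j * M3 b k} := by
  rw [Metric.dense_iff]
  intro P r hr
  set q : Polynomial ℂ :=
    ((C (P 0 0 0) + X) * (C (P 1 1 0) + X) - C (P 0 1 0) * C (P 1 0 0)) *
      (((C (P 0 0 0) + X) * (C (P 1 1 1) + C 2 * X) + (C (P 1 1 0) + X) * (C (P 0 0 1) + X)
          - C (P 0 1 0) * C (P 1 0 1) - C (P 1 0 0) * C (P 0 1 1)) ^ 2
        - 4 * ((C (P 0 0 0) + X) * (C (P 1 1 0) + X) - C (P 0 1 0) * C (P 1 0 0)) *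
          ((C (P 0 0 1) + X) * (C (P 1 1 1) + C 2 * X) - C (P 0 1 1) * C (P 1 0 1))) with hq
  have heval : ∀ t : ℂ, q.eval t = gg (fun i j k => P i j k + t * EE i j k) := by
    intro t
    simp only [hq, gg, dA, dB, mm, EE, eval_add, eval_mul, eval_sub, eval_pow, eval_C, eval_X,
      eval_ofNat, Matrix.cons_val_zero, Matrix.cons_val_one, Matrix.head_cons]
    ring
  have hq0 : q ≠ 0 := by
    intro h0
    set u : ℂ → ℂ := fun t => gg (fun i j k => EE i j k + t * P i j k) with hu
    have hcont : Continuous u := by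
      simp only [hu, gg, dA, dB, mm]
      fun_prop
    have hu0 : u 0 ≠ 0 := by
      norm_num [hu, gg, dA, dB, mm, EE]
    have hev : ∀ᶠ t in nhdsWithin (0 : ℂ) {(0:ℂ)}ᶜ, u t ≠ 0 :=
      ((hcont.continuousAt (x := 0)).eventually_ne hu0).filter_mono nhdsWithin_le_nhds
    obtain ⟨t, htu, htne'⟩ := (hev.and (eventually_mem_nhdsWithin)).exists
    have htne : t ≠ 0 := htne'
    have h1 : (fun i j k => P i j k + t⁻¹ * EE i j k)
        = (fun i j k => t⁻¹ * (EE i j k + t * P i j k)) := by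
      funext i j k
      field_simp
      ring
    have h2 : q.eval t⁻¹ = (t⁻¹) ^ 6 * u t := by
      rw [heval, h1, gsmul]
    rw [h0] at h2
    simp only [eval_zero] at h2
    exact (mul_ne_zero (pow_ne_zero 6 (inv_ne_zero htne)) htu) h2.symm
  have hfin := q.finite_setOf_isRoot hq0
  set f : ℕ → ℂ := fun n => ((r / (4 * (n + 1)) : ℝ) : ℂ) with hf
  have hinj : Function.Injective f := by
    intro m n h
    simp only [hf, Complex.ofReal_inj] at h
    have h4m : (0:ℝ) < 4 * (m + 1) := by positivity
    have h4n : (0:ℝ) < 4 * (n + 1) := by positivity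
    rw [div_eq_div_iff (ne_of_gt h4m) (ne_of_gt h4n)] at h
    have : ((m : ℝ)) = n := by
      have := mul_left_cancel₀ (ne_of_gt hr) h
      linarith
    exact_mod_cast this
  obtain ⟨t, ht⟩ := ((Set.infinite_range_of_injective hinj).diff hfin).nonempty
  obtain ⟨⟨n, rfl⟩, htroot⟩ := ht
  refine ⟨fun i j k => P i j k + f n * EE i j k, ?_, ?_⟩
  · rw [Metric.mem_ball]
    rw [dist_pi_lt_iff hr]
    intro i
    rw [dist_pi_lt_iff hr]
    intro j
    rw [dist_pi_lt_iff hr]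
    intro k
    have hE : ‖EE i j k‖ ≤ 2 := by
      fin_cases i <;> fin_cases j <;> fin_cases k <;> norm_num [EE]
    have hfn : ‖f n‖ = r / (4 * (n + 1)) := by
      rw [hf]
      simp only [Complex.norm_real, Real.norm_eq_abs]
      rw [abs_of_nonneg (by positivity)]
    calc dist (P i j k + f n * EE i j k) (P i j k) = ‖f n * EE i j k‖ := by
          rw [dist_eq_norm, add_sub_cancel_left]
      _ = ‖f n‖ * ‖EE i j k‖ := norm_mul _ _
      _ ≤ (r / (4 * (n + 1))) * 2 := by
          rw [hfn]; exact mul_le_mul_of_nonneg_left hE (by positivity)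
      _ < r := by
          rw [div_mul_eq_mul_div]
          rw [div_lt_iff₀ (by positivity)]
          nlinarith [Nat.cast_nonneg (α := ℝ) n]
  · exact mem_S _ (by rw [← heval]; exact fun h => htroot h)
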